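/- Let A be a real m×n matrix whose columns a_1,…,a_n are ℓ2-normalized, and let μ = max_{i≠j} |⟨a_i, a_j⟩| be its coherence. Then for every positive integer k with k < 1/μ + 1, the matrix A satisfies the restricted isometry property of order k with constant δ_k = μ(k−1): for every vector x ∈ ℝ^n with at most k nonzero entries, (1 − μ(k−1))·‖x‖₂² ≤ ‖Ax‖₂² ≤ (1 + μ(k−1))·‖x‖₂². -/
import Mathlib


open Finset

/-- coherence implies RIP of order `k` with constant `μ(k-1)` for
`k < 1/μ + 1`, for a matrix with ℓ2-normalized columns. -/
theorem coherence_implies_RIP (m n : ℕ) (A : Matrix (Fin m) (Fin n) ℝ)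
    (hnorm : ∀ i : Fin n, ∑ k : Fin m, (A k i) ^ 2 = 1)
    (μ : ℝ)
    (hμ : IsGreatest {t : ℝ | ∃ i j : Fin n, i ≠ j ∧
        t = |∑ k : Fin m, A k i * A k j|} μ)
    (k : ℕ) (hk0 : 0 < k) (hk : (k : ℝ) < 1 / μ + 1) :
    ∀ x : Fin n → ℝ,
      (Finset.univ.filter (fun i => x i ≠ 0)).card ≤ k →
      (1 - μ * ((k : ℝ) - 1)) * (∑ i : Fin n, (x i) ^ 2) ≤
          ∑ l : Fin m, (A.mulVec x l) ^ 2 ∧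
        ∑ l : Fin m, (A.mulVec x l) ^ 2 ≤
          (1 + μ * ((k : ℝ) - 1)) * (∑ i : Fin n, (x i) ^ 2) := by
  obtain ⟨⟨i0, j0, hij0, hμ0⟩, hub⟩ := hμ
  have hμnn : 0 ≤ μ := hμ0 ▸ abs_nonneg _
  intro x hx
  set S := Finset.univ.filter (fun i => x i ≠ 0) with hS
  set Q : ℝ := ∑ i : Fin n, (x i) ^ 2 with hQ
  have hQnn : 0 ≤ Q := Finset.sum_nonneg fun i _ => sq_nonneg _
  -- restrict sums to support
  have habs : ∑ i : Fin n, |x i| = ∑ i ∈ S, |x i| := by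
    refine (Finset.sum_subset (Finset.subset_univ S) fun i _ hi => ?_).symm
    simp only [hS, Finset.mem_filter, Finset.mem_univ, true_and, not_not] at hi
    simp [hi]
  have hQS : Q = ∑ i ∈ S, (x i) ^ 2 := by
    refine (Finset.sum_subset (Finset.subset_univ S) fun i _ hi => ?_).symm
    simp only [hS, Finset.mem_filter, Finset.mem_univ, true_and, not_not] at hi
    simp [hi]
  -- main identity
  have key : ∑ l : Fin m, (A.mulVec x l) ^ 2
      = ∑ i : Fin n, ∑ j : Fin n, x i * x j * ∑ l : Fin m, A l i * A l j := by
    have h1 : ∀ l, (A.mulVec x l) ^ 2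
        = ∑ i : Fin n, ∑ j : Fin n, (x i * x j) * (A l i * A l j) := by
      intro l
      rw [Matrix.mulVec, dotProduct, sq, Finset.sum_mul_sum]
      exact Finset.sum_congr rfl fun i _ => Finset.sum_congr rfl fun j _ => by ring
    rw [Finset.sum_congr rfl fun l _ => h1 l, Finset.sum_comm]
    refine Finset.sum_congr rfl fun i _ => ?_
    rw [Finset.sum_comm]
    exact Finset.sum_congr rfl fun j _ => by rw [Finset.mul_sum]
  -- split diagonal
  set E : ℝ := ∑ i : Fin n, ∑ j ∈ Finset.univ.erase i, x i * x j * ∑ l : Fin m, A l i * A l j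
    with hE
  have split : ∑ l : Fin m, (A.mulVec x l) ^ 2 = Q + E := by
    rw [key, hQ, hE, ← Finset.sum_add_distrib]
    refine Finset.sum_congr rfl fun i _ => ?_
    rw [← Finset.add_sum_erase _ _ (Finset.mem_univ i)]
    congr 1
    have := hnorm i
    have h2 : ∑ l : Fin m, A l i * A l i = 1 := by
      rw [← this]; exact Finset.sum_congr rfl fun l _ => (sq (A l i)).symm ▸ by ring
    rw [h2]; ring
  -- bound E
  have hEbound : |E| ≤ μ * ((k : ℝ) - 1) * Q := by
    have h3 : |E| ≤ ∑ i : Fin n, ∑ j ∈ Finset.univ.erase i, |x i| * |x j| * μ := by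
      refine (Finset.abs_sum_le_sum_abs _ _).trans (Finset.sum_le_sum fun i _ => ?_)
      refine (Finset.abs_sum_le_sum_abs _ _).trans (Finset.sum_le_sum fun j hj => ?_)
      rw [abs_mul, abs_mul]
      refine mul_le_mul_of_nonneg_left ?_ (by positivity)
      exact hub ⟨i, j, (Finset.ne_of_mem_erase hj).symm, rfl⟩
    have h4 : ∑ i : Fin n, ∑ j ∈ Finset.univ.erase i, |x i| * |x j| * μ
        = μ * ((∑ i : Fin n, |x i|) ^ 2 - Q) := by
      have : ∀ i : Fin n, ∑ j ∈ Finset.univ.erase i, |x i| * |x j| * μ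
          = μ * (|x i| * (∑ j : Fin n, |x j|) - (x i) ^ 2) := by
        intro i
        rw [Finset.sum_erase_eq_sub (Finset.mem_univ i)]
        have h7 : ∑ j : Fin n, |x i| * |x j| * μ = μ * (|x i| * ∑ j : Fin n, |x j|) := by
          rw [Finset.mul_sum, Finset.mul_sum]
          exact Finset.sum_congr rfl fun j _ => by ring
        have h6 : |x i| * |x i| = x i ^ 2 := by rw [← abs_mul, ← sq, abs_sq]
        rw [h7, h6]; ring
      rw [Finset.sum_congr rfl fun i _ => this i, ← Finset.mul_sum]
      congr 1
      rw [Finset.sum_sub_distrib, ← Finset.sum_mul, sq, hQ]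
    have h5 : (∑ i : Fin n, |x i|) ^ 2 ≤ (k : ℝ) * Q := by
      rw [habs, hQS]
      calc (∑ i ∈ S, |x i|) ^ 2 ≤ (S.card : ℝ) * ∑ i ∈ S, |x i| ^ 2 :=
            sq_sum_le_card_mul_sum_sq
        _ ≤ (k : ℝ) * ∑ i ∈ S, (x i) ^ 2 := by
            refine mul_le_mul (by exact_mod_cast hx) (le_of_eq ?_)
              (Finset.sum_nonneg fun i _ => sq_nonneg _) (by positivity)
            exact Finset.sum_congr rfl fun i _ => sq_abs _
    calc |E| ≤ μ * ((∑ i : Fin n, |x i|) ^ 2 - Q) := h4 ▸ h3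
      _ ≤ μ * ((k : ℝ) * Q - Q) := by
          refine mul_le_mul_of_nonneg_left (by linarith) hμnn
      _ = μ * ((k : ℝ) - 1) * Q := by ring
  rw [split]
  rw [abs_le] at hEbound
  constructor <;> nlinarith [hEbound.1, hEbound.2]
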